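/- For every γ-almost-fixed-length hypothesis test at blocklength n (a stopping time τ with τ ≤ c·n^l, decision events A₁^τ, A₂^τ, and P_i(τ > n) ≤ e^{−γn} for i ∈ {1,2}), there exists a fixed-length test with rejection at blocklength n whose error probabilities satisfy P₁(A₂^n) ≤ P₁(A₂^τ) and P₂(A₁^n) ≤ P₂(A₁^τ), and whose rejection region satisfies P₁(A_Ω^n) ≤ e^{−γn} and P₂(A_Ω^n) ≤ e^{−γn}. -/
import Mathlib


open Real Filter Finset MeasureTheory
open scoped Classical

variable {𝒳 : Type*} [Fintype 𝒳] [DecidableEq 𝒳] [Nonempty 𝒳]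

/-- Kullback–Leibler divergence `D(Q‖P)` between pmfs on a finite alphabet. -/
noncomputable def kl (Q P : 𝒳 → ℝ) : ℝ :=
  ∑ x, Q x * Real.log (Q x / P x)

/-- The `λ`-tilted distribution `P^(λ)` of `P₁` and `P₂`. -/
noncomputable def tilt (P₁ P₂ : 𝒳 → ℝ) (l : ℝ) : 𝒳 → ℝ :=
  fun x => P₁ x ^ (1 - l) * P₂ x ^ l / ∑ a, P₁ a ^ (1 - l) * P₂ a ^ l

/-- Probability of a set of length-`N` sample paths under i.i.d. sampling from `P`. -/
noncomputable def prodProb (P : 𝒳 → ℝ) {N : ℕ} (S : Set (Fin N → 𝒳)) : ℝ :=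
  ∑ ω : Fin N → 𝒳, S.indicator (fun ω' => ∏ i, P (ω' i)) ω

/-- The fixed-length error-exponent region `R_FD`. -/
def RFD (P₁ P₂ : 𝒳 → ℝ) : Set (ℝ × ℝ) :=
  {p | 0 ≤ p.1 ∧ 0 ≤ p.2 ∧
    ∃ l ∈ Set.Icc (0:ℝ) 1,
      p.1 ≤ kl (tilt P₁ P₂ l) P₁ ∧ p.2 ≤ kl (tilt P₁ P₂ l) P₂}

/-- `E₁(γ) = max{D(P^(λ)‖P₁) : λ ∈ [0,1], D(P^(λ)‖P₂) ≥ γ}` (sup of the empty set is 0). -/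
noncomputable def E1exp (P₁ P₂ : 𝒳 → ℝ) (γ : ℝ) : ℝ :=
  sSup {E | ∃ l ∈ Set.Icc (0:ℝ) 1, γ ≤ kl (tilt P₁ P₂ l) P₂ ∧ E = kl (tilt P₁ P₂ l) P₁}

/-- `E₂(γ) = max{D(P^(λ)‖P₂) : λ ∈ [0,1], D(P^(λ)‖P₁) ≥ γ}` (sup of the empty set is 0). -/
noncomputable def E2exp (P₁ P₂ : 𝒳 → ℝ) (γ : ℝ) : ℝ :=
  sSup {E | ∃ l ∈ Set.Icc (0:ℝ) 1, γ ≤ kl (tilt P₁ P₂ l) P₁ ∧ E = kl (tilt P₁ P₂ l) P₂}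

/-- A sequential hypothesis test whose stopping time is bounded by `N`:
a stopping time `τ` for the coordinate filtration, together with decision events
`A1`, `A2` that are determined by the samples observed up to time `τ`,
are disjoint, and exhaust the sample space. -/
structure HypTest (𝒳 : Type*) (N : ℕ) where
  τ : (Fin N → 𝒳) → ℕ
  A1 : Set (Fin N → 𝒳)
  A2 : Set (Fin N → 𝒳)
  tau_le : ∀ ω, τ ω ≤ N
  stopping : ∀ ω ω', (∀ i : Fin N, (i : ℕ) < τ ω → ω i = ω' i) → τ ω' = τ ω
  adapted1 : ∀ ω ω', (∀ i : Fin N, (i : ℕ) < τ ω → ω i = ω' i) → (ω ∈ A1 ↔ ω' ∈ A1)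
  adapted2 : ∀ ω ω', (∀ i : Fin N, (i : ℕ) < τ ω → ω i = ω' i) → (ω ∈ A2 ↔ ω' ∈ A2)
  disj : Disjoint A1 A2
  exhaust : A1 ∪ A2 = Set.univ

/-- `(E₁, E₂)` is achievable by `γ`-almost-fixed-length tests. -/
def AFLAchievable (P₁ P₂ : 𝒳 → ℝ) (γ E₁ E₂ : ℝ) : Prop :=
  0 ≤ E₁ ∧ 0 ≤ E₂ ∧
  ∃ c : ℝ, 0 < c ∧ ∃ l : ℕ, 0 < l ∧
    ∀ δ : ℝ, 0 < δ → ∃ n₀ : ℕ, ∀ n : ℕ, n₀ ≤ n →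
      ∃ N : ℕ, (N : ℝ) ≤ c * (n : ℝ) ^ l ∧
        ∃ T : HypTest 𝒳 N,
          prodProb P₁ {ω | n < T.τ ω} ≤ Real.exp (-(γ * n)) ∧
          prodProb P₂ {ω | n < T.τ ω} ≤ Real.exp (-(γ * n)) ∧
          prodProb P₁ T.A2 ≤ Real.exp (-((E₁ - δ) * n)) ∧
          prodProb P₂ T.A1 ≤ Real.exp (-((E₂ - δ) * n))

/-- `(E₁, E₂, E_Ω)` is achievable by fixed-length tests with a rejection option. -/
def RejAchievable (P₁ P₂ : 𝒳 → ℝ) (E₁ E₂ EΩ : ℝ) : Prop :=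
  0 ≤ E₁ ∧ 0 ≤ E₂ ∧ 0 ≤ EΩ ∧
  ∀ δ : ℝ, 0 < δ → ∃ n₀ : ℕ, ∀ n : ℕ, n₀ ≤ n →
    ∃ A1 A2 AΩ : Set (Fin n → 𝒳),
      Disjoint A1 A2 ∧ Disjoint A1 AΩ ∧ Disjoint A2 AΩ ∧ A1 ∪ A2 ∪ AΩ = Set.univ ∧
      prodProb P₁ A2 ≤ Real.exp (-((E₁ - δ) * n)) ∧
      prodProb P₂ A1 ≤ Real.exp (-((E₂ - δ) * n)) ∧
      prodProb P₁ AΩ + prodProb P₂ AΩ ≤ Real.exp (-((EΩ - δ) * n))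

/-- Sum of the log-likelihood ratios of the first `n` samples. -/
noncomputable def S1 (P₁ P₂ : 𝒳 → ℝ) (n : ℕ) {N : ℕ} (ω : Fin N → 𝒳) : ℝ :=
  ∑ i ∈ Finset.univ.filter (fun i : Fin N => (i : ℕ) < n),
    Real.log (P₁ (ω i) / P₂ (ω i))

/-- Sum of the log-likelihood ratios of the samples after time `n`. -/
noncomputable def S2 (P₁ P₂ : 𝒳 → ℝ) (n : ℕ) {N : ℕ} (ω : Fin N → 𝒳) : ℝ :=
  ∑ i ∈ Finset.univ.filter (fun i : Fin N => n ≤ (i : ℕ)),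
    Real.log (P₁ (ω i) / P₂ (ω i))

/-- Event that the two-phase test (phase-one thresholds `α₁ > β₁`, phase-two threshold `α`)
chooses `H₁`. -/
def twoPhaseA1 (P₁ P₂ : 𝒳 → ℝ) (k n : ℕ) (α₁ β₁ α : ℝ) : Set (Fin ((k + 1) * n) → 𝒳) :=
  {ω | α₁ ≤ S1 P₁ P₂ n ω / n ∨
    (β₁ < S1 P₁ P₂ n ω / n ∧ S1 P₁ P₂ n ω / n < α₁ ∧ α ≤ S2 P₁ P₂ n ω / (k * n))}

/-- Event that the two-phase test chooses `H₂`. -/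
def twoPhaseA2 (P₁ P₂ : 𝒳 → ℝ) (k n : ℕ) (α₁ β₁ α : ℝ) : Set (Fin ((k + 1) * n) → 𝒳) :=
  {ω | S1 P₁ P₂ n ω / n ≤ β₁ ∨
    (β₁ < S1 P₁ P₂ n ω / n ∧ S1 P₁ P₂ n ω / n < α₁ ∧ S2 P₁ P₂ n ω / (k * n) < α)}

/-- Stopping time of the two-phase test: `n` if phase one is decisive, `(k+1)n` otherwise. -/
noncomputable def twoPhaseTau (P₁ P₂ : 𝒳 → ℝ) (k n : ℕ) (α₁ β₁ : ℝ)
    (ω : Fin ((k + 1) * n) → 𝒳) : ℕ :=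
  if β₁ < S1 P₁ P₂ n ω / n ∧ S1 P₁ P₂ n ω / n < α₁ then (k + 1) * n else n
section AuxAFL
omit [Nonempty 𝒳]

lemma prodProb_mono' (P : 𝒳 → ℝ) (hP : ∀ x, 0 ≤ P x) {N : ℕ} {S S' : Set (Fin N → 𝒳)}
    (h : S ⊆ S') : prodProb P S ≤ prodProb P S' := by
  apply Finset.sum_le_sum
  intro ω _
  apply Set.indicator_le_indicator_of_subset h
  intro ω'
  exact Finset.prod_nonneg fun i _ => hP _

def splitEquivAFL (𝒳 : Type*) {n N : ℕ} (h : n ≤ N) :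
    (Fin N → 𝒳) ≃ (Fin n → 𝒳) × (Fin (N - n) → 𝒳) where
  toFun ω := (fun i => ω (Fin.castLE h i), fun j => ω ⟨n + j, by omega⟩)
  invFun p := fun i => if h' : (i : ℕ) < n then p.1 ⟨i, h'⟩ else p.2 ⟨(i : ℕ) - n, by omega⟩
  left_inv ω := by
    funext i
    by_cases h' : (i : ℕ) < n
    · simp only [dif_pos h']
      exact congrArg ω (Fin.ext rfl)
    · simp only [dif_neg h']
      exact congrArg ω (Fin.ext (by simp; omega))
  right_inv p := by
    refine Prod.ext ?_ ?_
    · funext i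
      simp only [Fin.coe_castLE, Fin.is_lt, dif_pos]
    · funext j
      have h1 : ¬ ((n + (j:ℕ)) < n) := by omega
      simp only [dif_neg h1]
      exact congrArg p.2 (Fin.ext (by simp))

lemma prodProb_marginal (P : 𝒳 → ℝ) (hsum : ∑ x, P x = 1)
    {n N : ℕ} (h : n ≤ N) (S : Set (Fin n → 𝒳)) :
    prodProb P {ω : Fin N → 𝒳 | (fun i => ω (Fin.castLE h i)) ∈ S} = prodProb P S := by
  unfold prodProb
  rw [← Equiv.sum_comp ((splitEquivAFL 𝒳 h).symm) (fun ω : Fin N → 𝒳 =>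
      Set.indicator {ω : Fin N → 𝒳 | (fun i => ω (Fin.castLE h i)) ∈ S}
        (fun ω' => ∏ i, P (ω' i)) ω)]
  rw [Fintype.sum_prod_type]
  have key : ∀ (a : Fin n → 𝒳) (b : Fin (N - n) → 𝒳),
      Set.indicator {ω : Fin N → 𝒳 | (fun i => ω (Fin.castLE h i)) ∈ S}
        (fun ω' => ∏ i, P (ω' i)) ((splitEquivAFL 𝒳 h).symm (a, b))
      = (S.indicator (fun ω' => ∏ i, P (ω' i)) a) * ∏ j, P (b j) := by
    intro a b
    have hres : (fun i => ((splitEquivAFL 𝒳 h).symm (a, b)) (Fin.castLE h i)) = a := by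
      have := ((splitEquivAFL 𝒳 h).apply_symm_apply (a, b))
      exact congrArg Prod.fst this
    have hprod : ∏ i : Fin N, P (((splitEquivAFL 𝒳 h).symm (a, b)) i)
        = (∏ i : Fin n, P (a i)) * ∏ j : Fin (N - n), P (b j) := by
      have hNn : N = n + (N - n) := by omega
      rw [Fintype.prod_equiv (finCongr hNn)
        (fun i : Fin N => P (((splitEquivAFL 𝒳 h).symm (a, b)) i))
        (fun i : Fin (n + (N - n)) => P (((splitEquivAFL 𝒳 h).symm (a, b)) (finCongr hNn.symm i)))
        (by intro i; congr 1)]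
      rw [Fin.prod_univ_add]
      congr 1
      · apply Fintype.prod_congr
        intro i
        congr 1
        show (splitEquivAFL 𝒳 h).symm (a, b) _ = a i
        simp only [splitEquivAFL, Equiv.coe_fn_symm_mk]
        have : ((finCongr hNn.symm (Fin.castAdd (N-n) i)) : ℕ) = (i : ℕ) := by simp
        rw [dif_pos (by omega : ((finCongr hNn.symm (Fin.castAdd (N-n) i)) : ℕ) < n)]
        exact congrArg a (Fin.ext this)
      · apply Fintype.prod_congr
        intro j
        congr 1
        show (splitEquivAFL 𝒳 h).symm (a, b) _ = b j
        simp only [splitEquivAFL, Equiv.coe_fn_symm_mk]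
        have hv : ((finCongr hNn.symm (Fin.natAdd n j)) : ℕ) = n + (j : ℕ) := by simp
        rw [dif_neg (by omega)]
        exact congrArg b (Fin.ext (by simp))
    by_cases hm : a ∈ S
    · rw [Set.indicator_of_mem (by simpa [hres] using hm), Set.indicator_of_mem hm, hprod]
    · rw [Set.indicator_of_notMem (by simpa [hres] using hm), Set.indicator_of_notMem hm]
      simp
  calc ∑ a : Fin n → 𝒳, ∑ b : Fin (N-n) → 𝒳,
        Set.indicator {ω : Fin N → 𝒳 | (fun i => ω (Fin.castLE h i)) ∈ S}
          (fun ω' => ∏ i, P (ω' i)) ((splitEquivAFL 𝒳 h).symm (a, b))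
      = ∑ a : Fin n → 𝒳, (S.indicator (fun ω' => ∏ i, P (ω' i)) a) * ∑ b : Fin (N-n) → 𝒳, ∏ j, P (b j) := by
        apply Finset.sum_congr rfl; intro a _
        rw [Finset.mul_sum]
        exact Finset.sum_congr rfl fun b _ => key a b
    _ = ∑ a : Fin n → 𝒳, S.indicator (fun ω' => ∏ i, P (ω' i)) a := by
        apply Finset.sum_congr rfl; intro a _
        rw [← Fintype.sum_pow P (N - n), hsum, one_pow, mul_one]

end AuxAFL

/-- From any γ-almost-fixed-length test one can build a fixed-length test with rejection
at blocklength `n` whose errors are no larger and whose rejection probability is at most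
`e^{−γn}` under each hypothesis. -/
theorem afl_test_to_rejection_test (P₁ P₂ : 𝒳 → ℝ)
    (h1pos : ∀ x, 0 < P₁ x) (h2pos : ∀ x, 0 < P₂ x)
    (h1sum : ∑ x, P₁ x = 1) (h2sum : ∑ x, P₂ x = 1)
    (hne : P₁ ≠ P₂)
    (γ c : ℝ) (hγ : 0 < γ) (hc : 0 < c) (l : ℕ) (hl : 0 < l)
    (n N : ℕ) (hn : 1 ≤ n) (hN : (N : ℝ) ≤ c * (n : ℝ) ^ l)
    (T : HypTest 𝒳 N)
    (ht1 : prodProb P₁ {ω | n < T.τ ω} ≤ Real.exp (-(γ * n)))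
    (ht2 : prodProb P₂ {ω | n < T.τ ω} ≤ Real.exp (-(γ * n))) :
    ∃ A1 A2 AΩ : Set (Fin n → 𝒳),
      Disjoint A1 A2 ∧ Disjoint A1 AΩ ∧ Disjoint A2 AΩ ∧ A1 ∪ A2 ∪ AΩ = Set.univ ∧
      prodProb P₁ A2 ≤ prodProb P₁ T.A2 ∧
      prodProb P₂ A1 ≤ prodProb P₂ T.A1 ∧
      prodProb P₁ AΩ ≤ Real.exp (-(γ * n)) ∧
      prodProb P₂ AΩ ≤ Real.exp (-(γ * n)) := by
  have h1pos' : ∀ x, 0 ≤ P₁ x := fun x => (h1pos x).le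
  have h2pos' : ∀ x, 0 ≤ P₂ x := fun x => (h2pos x).le
  by_cases hcase : N ≤ n
  · -- the whole test fits within blocklength n; no rejection needed
    refine ⟨{ω : Fin n → 𝒳 | (fun i => ω (Fin.castLE hcase i)) ∈ T.A1},
            {ω : Fin n → 𝒳 | (fun i => ω (Fin.castLE hcase i)) ∈ T.A2}, ∅,
            ?_, ?_, ?_, ?_, ?_, ?_, ?_, ?_⟩
    · rw [Set.disjoint_left]
      intro ω h1 h2
      exact Set.disjoint_left.mp T.disj h1 h2
    · exact Set.disjoint_empty _
    · exact Set.disjoint_empty _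
    · rw [Set.union_empty]
      ext ω
      simp only [Set.mem_union, Set.mem_setOf_eq, Set.mem_univ, iff_true]
      have : (fun i => ω (Fin.castLE hcase i)) ∈ T.A1 ∪ T.A2 := by
        rw [T.exhaust]; trivial
      exact this
    · exact le_of_eq (prodProb_marginal P₁ h1sum hcase T.A2)
    · exact le_of_eq (prodProb_marginal P₂ h2sum hcase T.A1)
    · rw [show prodProb P₁ (∅ : Set (Fin n → 𝒳)) = 0 by simp [prodProb]]
      exact (Real.exp_pos _).le
    · rw [show prodProb P₂ (∅ : Set (Fin n → 𝒳)) = 0 by simp [prodProb]]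
      exact (Real.exp_pos _).le
  · -- n < N : truncate at n
    have hle : n ≤ N := le_of_lt (lt_of_not_ge hcase)
    have hn0 : 0 < n := hn
    set ext : (Fin n → 𝒳) → (Fin N → 𝒳) :=
      fun ω i => if h' : (i : ℕ) < n then ω ⟨i, h'⟩ else ω ⟨0, hn0⟩ with hext
    -- agreement of ext (restriction of ω') with ω' on the first n coordinates
    have hag : ∀ (ω' : Fin N → 𝒳) (i : Fin N), (i : ℕ) < n →
        ext (fun j => ω' (Fin.castLE hle j)) i = ω' i := by
      intro ω' i hi
      simp only [hext, dif_pos hi]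
      exact congrArg ω' (Fin.ext rfl)
    refine ⟨{ω : Fin n → 𝒳 | T.τ (ext ω) ≤ n ∧ ext ω ∈ T.A1},
            {ω : Fin n → 𝒳 | T.τ (ext ω) ≤ n ∧ ext ω ∈ T.A2},
            {ω : Fin n → 𝒳 | n < T.τ (ext ω)}, ?_, ?_, ?_, ?_, ?_, ?_, ?_, ?_⟩
    · rw [Set.disjoint_left]
      intro ω h1 h2
      exact Set.disjoint_left.mp T.disj h1.2 h2.2
    · rw [Set.disjoint_left]
      intro ω h1 h2
      exact absurd h2 (not_lt.mpr h1.1)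
    · rw [Set.disjoint_left]
      intro ω h1 h2
      exact absurd h2 (not_lt.mpr h1.1)
    · ext ω
      simp only [Set.mem_union, Set.mem_setOf_eq, Set.mem_univ, iff_true]
      rcases le_or_gt (T.τ (ext ω)) n with hτ | hτ
      · have : ext ω ∈ T.A1 ∪ T.A2 := by rw [T.exhaust]; trivial
        rcases this with h | h
        · exact Or.inl (Or.inl ⟨hτ, h⟩)
        · exact Or.inl (Or.inr ⟨hτ, h⟩)
      · exact Or.inr hτ
    · rw [← prodProb_marginal P₁ h1sum hle]
      apply prodProb_mono' P₁ h1pos'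
      intro ω' hω'
      simp only [Set.mem_setOf_eq] at hω' ⊢
      obtain ⟨hτ, hA⟩ := hω'
      have hag' : ∀ i : Fin N, (i : ℕ) < T.τ (ext fun j => ω' (Fin.castLE hle j)) →
          (ext fun j => ω' (Fin.castLE hle j)) i = ω' i :=
        fun i hi => hag ω' i (lt_of_lt_of_le hi hτ)
      exact (T.adapted2 _ ω' hag').mp hA
    · rw [← prodProb_marginal P₂ h2sum hle]
      apply prodProb_mono' P₂ h2pos'
      intro ω' hω'
      simp only [Set.mem_setOf_eq] at hω' ⊢
      obtain ⟨hτ, hA⟩ := hω'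
      have hag' : ∀ i : Fin N, (i : ℕ) < T.τ (ext fun j => ω' (Fin.castLE hle j)) →
          (ext fun j => ω' (Fin.castLE hle j)) i = ω' i :=
        fun i hi => hag ω' i (lt_of_lt_of_le hi hτ)
      exact (T.adapted1 _ ω' hag').mp hA
    · refine le_trans ?_ ht1
      rw [← prodProb_marginal P₁ h1sum hle]
      apply prodProb_mono' P₁ h1pos'
      intro ω' hω'
      simp only [Set.mem_setOf_eq] at hω' ⊢
      by_contra hcon
      push_neg at hcon
      have hag' : ∀ i : Fin N, (i : ℕ) < T.τ ω' →
          ω' i = (ext fun j => ω' (Fin.castLE hle j)) i :=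
        fun i hi => (hag ω' i (lt_of_lt_of_le hi hcon)).symm
      have := T.stopping ω' _ hag'
      omega
    · refine le_trans ?_ ht2
      rw [← prodProb_marginal P₂ h2sum hle]
      apply prodProb_mono' P₂ h2pos'
      intro ω' hω'
      simp only [Set.mem_setOf_eq] at hω' ⊢
      by_contra hcon
      push_neg at hcon
      have hag' : ∀ i : Fin N, (i : ℕ) < T.τ ω' →
          ω' i = (ext fun j => ω' (Fin.castLE hle j)) i :=
        fun i hi => (hag ω' i (lt_of_lt_of_le hi hcon)).symm
      have := T.stopping ω' _ hag'
      omega
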